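/- Let {(X_i, 𝓛_i)}_{i∈I} be a family of locally small spaces (each X_i a subset of a common ambient set) satisfying the gluing condition (⋆): for all i, j ∈ I, the set X_i ∩ X_j belongs to 𝓛_i° and to 𝓛_j°, and {L ∩ X_j : L ∈ 𝓛_i} = {M ∩ X_i : M ∈ 𝓛_j}. Let X = ⋃_{i∈I} X_i and let 𝓛_X be the smallest ring of subsets of X (family containing ∅ and closed under binary unions and binary intersections) containing ⋃_{i∈I} 𝓛_i. Then: (a) the members of 𝓛_X are exactly the sets of the form L_1 ∪ … ∪ L_k with each L_j belonging to some 𝓛_{i_j}; (b) for each i ∈ I, X_i ∈ 𝓛_X° and 𝓛_i = {L ∩ X_i : L ∈ 𝓛_X} (so each (X_i, 𝓛_i) is an open subspace of (X, 𝓛_X)); (c) the family {X_i}_{i∈I} is admissible in (X, 𝓛_X). -/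

import Mathlib

open Set

/-- The family of sets compatible with a family `L`:
`L° = {Y : ∀ M ∈ L, Y ∩ M ∈ L}`. -/
def compatible {X : Type*} (L : Set (Set X)) : Set (Set X) :=
  {Y | ∀ M ∈ L, Y ∩ M ∈ L}

/-- The small sets: `Lˢ = {B : ∃ M ∈ L, B ⊆ M}`. -/
def smalls {X : Type*} (L : Set (Set X)) : Set (Set X) :=
  {B | ∃ M ∈ L, B ⊆ M}

/-- The weakly open sets: `L^wo = {⋃₀ U : U ⊆ L}`. -/
def weaklyOpens {X : Type*} (L : Set (Set X)) : Set (Set X) :=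
  {W | ∃ U ⊆ L, W = ⋃₀ U}

/-- `(X, L)` is a locally small space: `∅ ∈ L`, `L` is closed under binary
intersections and unions, and `L` covers `X`. -/
def IsLSS {X : Type*} (L : Set (Set X)) : Prop :=
  ∅ ∈ L ∧ (∀ a ∈ L, ∀ b ∈ L, a ∩ b ∈ L ∧ a ∪ b ∈ L) ∧ ⋃₀ L = Set.univ

/-- An admissible (locally essentially finite) open family. -/
def Admissible {X : Type*} (L U : Set (Set X)) : Prop :=
  U ⊆ compatible L ∧
    ∀ M ∈ L, ∃ F ⊆ U, F.Finite ∧ (⋃₀ U) ∩ M = (⋃₀ F) ∩ M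

/-- The smallest ring of sets (containing `∅`, closed under binary unions and
intersections) containing a family `S`. -/
def ringGen {X : Type*} (S : Set (Set X)) : Set (Set X) :=
  ⋂₀ {R | S ⊆ R ∧ ∅ ∈ R ∧ ∀ a ∈ R, ∀ b ∈ R, a ∩ b ∈ R ∧ a ∪ b ∈ R}

theorem admissible_union_properties {A ι : Type*} (Xs : ι → Set A) (Ls : ι → Set (Set A))
    (hls : ∀ i, ∅ ∈ Ls i ∧ (∀ a ∈ Ls i, ∀ b ∈ Ls i, a ∩ b ∈ Ls i ∧ a ∪ b ∈ Ls i) ∧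
      ⋃₀ Ls i = Xs i)
    -- (⋆): each X_i ∩ X_j is open in (X_i, 𝓛_i) (and, by symmetry in i and j, in (X_j, 𝓛_j)),
    (hstar1 : ∀ i j, ∀ L ∈ Ls i, (Xs i ∩ Xs j) ∩ L ∈ Ls i)
    -- and the open subspaces induced by X_i ∩ X_j agree: 𝓛_i ∩₁ X_j = 𝓛_j ∩₁ X_i.
    (hstar2 : ∀ i j, (fun L => L ∩ Xs j) '' Ls i = (fun M => M ∩ Xs i) '' Ls j) :
    -- (a) members of 𝓛_X are exactly the finite unions of members of the 𝓛_i's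
    (ringGen (⋃ i, Ls i) =
       {L | ∃ F : Set (Set A), F.Finite ∧ F ⊆ (⋃ i, Ls i) ∧ L = ⋃₀ F}) ∧
    -- (b) each X_i is open in (X, 𝓛_X) and 𝓛_i is the induced family of smops
    (∀ i, Xs i ∈ compatible (ringGen (⋃ j, Ls j)) ∧
       Ls i = (fun L => L ∩ Xs i) '' ringGen (⋃ j, Ls j)) ∧
    -- (c) the family {X_i}_{i ∈ I} is admissible in (X, 𝓛_X)
    Admissible (ringGen (⋃ i, Ls i)) (Set.range Xs) := by
  set S : Set (Set A) := ⋃ i, Ls i with hS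
  -- basic facts
  have hsub : ∀ i, ∀ L ∈ Ls i, L ⊆ Xs i := fun i L hL => by
    rw [← (hls i).2.2]; exact subset_sUnion_of_mem hL
  have key1 : ∀ i j, ∀ L ∈ Ls i, ∀ M ∈ Ls j, L ∩ M ∈ Ls j := by
    intro i j L hL M hM
    obtain ⟨M', hM', hEq⟩ : L ∩ Xs j ∈ (fun M => M ∩ Xs i) '' Ls j := by
      rw [← hstar2 i j]; exact ⟨L, hL, rfl⟩
    replace hEq : M' ∩ Xs i = L ∩ Xs j := hEq
    have h1 : (Xs j ∩ Xs i) ∩ (M' ∩ M) ∈ Ls j :=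
      hstar1 j i _ ((hls j).2.1 M' hM' M hM).1
    have hLM : L ∩ M = (Xs j ∩ Xs i) ∩ (M' ∩ M) := by
      have hMj := hsub j M hM
      ext x
      simp only [mem_inter_iff]
      constructor
      · rintro ⟨hxL, hxM⟩
        have hx : x ∈ M' ∩ Xs i := by rw [hEq]; exact ⟨hxL, hMj hxM⟩
        exact ⟨⟨hMj hxM, hx.2⟩, hx.1, hxM⟩
      · rintro ⟨⟨-, hxi⟩, hxM', hxM⟩
        have hx : x ∈ L ∩ Xs j := by rw [← hEq]; exact ⟨hxM', hxi⟩
        exact ⟨hx.1, hxM⟩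
    rw [hLM]; exact h1
  have key2 : ∀ i j, ∀ M ∈ Ls j, M ∩ Xs i ∈ Ls i := by
    intro i j M hM
    obtain ⟨M'', hM'', hEq⟩ : M ∩ Xs i ∈ (fun L => L ∩ Xs j) '' Ls i := by
      rw [hstar2 i j]; exact ⟨M, hM, rfl⟩
    replace hEq : M'' ∩ Xs j = M ∩ Xs i := hEq
    have h1 : (Xs i ∩ Xs j) ∩ M'' ∈ Ls i := hstar1 i j M'' hM''
    have h2 : M ∩ Xs i = (Xs i ∩ Xs j) ∩ M'' := by
      rw [← hEq]
      have := hsub i M'' hM''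
      ext x; simp only [mem_inter_iff]
      tauto
    rw [h2]; exact h1
  -- finite unions stay inside any union-closed family with ∅
  have hgen : ∀ T : Set (Set A), ∅ ∈ T → (∀ a ∈ T, ∀ b ∈ T, a ∪ b ∈ T) →
      ∀ F : Set (Set A), F.Finite → F ⊆ T → ⋃₀ F ∈ T := by
    intro T hT0 hTu F hF
    refine Set.Finite.induction_on F hF (fun _ => by simpa using hT0) ?_
    intro L F hL hFfin ih hsub'
    rw [sUnion_insert]
    exact hTu _ (hsub' (mem_insert _ _)) _ (ih fun x hx => hsub' (mem_insert_of_mem _ hx))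
  have hsU : ∀ i, ∀ F : Set (Set A), F.Finite → F ⊆ Ls i → ⋃₀ F ∈ Ls i := fun i =>
    hgen (Ls i) (hls i).1 (fun a ha b hb => ((hls i).2.1 a ha b hb).2)
  -- the explicit description of the generated ring
  set R : Set (Set A) := {L | ∃ F : Set (Set A), F.Finite ∧ F ⊆ S ∧ L = ⋃₀ F} with hRdef
  have hSR : S ⊆ R := fun L hL =>
    ⟨{L}, finite_singleton L, singleton_subset_iff.mpr hL, (sUnion_singleton L).symm⟩
  have hR0 : ∅ ∈ R := ⟨∅, finite_empty, empty_subset _, by simp⟩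
  have hRring : ∀ a ∈ R, ∀ b ∈ R, a ∩ b ∈ R ∧ a ∪ b ∈ R := by
    rintro a ⟨F, hFfin, hFS, rfl⟩ b ⟨G, hGfin, hGS, rfl⟩
    constructor
    · refine ⟨Set.image2 (· ∩ ·) F G, hFfin.image2 _ hGfin, ?_, ?_⟩
      · rintro t ⟨L, hL, M, hM, rfl⟩
        obtain ⟨j, hj⟩ := mem_iUnion.1 (hGS hM)
        obtain ⟨i, hi⟩ := mem_iUnion.1 (hFS hL)
        exact mem_iUnion.2 ⟨j, key1 i j L hi M hj⟩
      · ext x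
        simp only [mem_inter_iff, mem_sUnion, Set.mem_image2]
        constructor
        · rintro ⟨⟨L, hL, hxL⟩, M, hM, hxM⟩
          exact ⟨L ∩ M, ⟨L, hL, M, hM, rfl⟩, hxL, hxM⟩
        · rintro ⟨t, ⟨L, hL, M, hM, rfl⟩, hxL, hxM⟩
          exact ⟨⟨L, hL, hxL⟩, M, hM, hxM⟩
    · exact ⟨F ∪ G, hFfin.union hGfin, union_subset hFS hGS, (sUnion_union F G).symm⟩
  have hRG : ringGen S = R := by
    apply subset_antisymm
    · exact sInter_subset_of_mem ⟨hSR, hR0, hRring⟩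
    · rintro L ⟨F, hFfin, hFS, rfl⟩
      intro T hT
      exact hgen T hT.2.1 (fun a ha b hb => (hT.2.2 a ha b hb).2) F hFfin
        (hFS.trans hT.1)
  -- (b) compatibility of each Xs i
  have hcompat : ∀ i, Xs i ∈ compatible (ringGen S) := by
    intro i M hM
    rw [hRG] at hM ⊢
    obtain ⟨F, hFfin, hFS, rfl⟩ := hM
    refine ⟨(fun L => L ∩ Xs i) '' F, hFfin.image _, ?_, ?_⟩
    · rintro t ⟨L, hL, rfl⟩
      obtain ⟨j, hj⟩ := mem_iUnion.1 (hFS hL)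
      exact mem_iUnion.2 ⟨i, key2 i j L hj⟩
    · ext x
      simp only [mem_inter_iff, mem_sUnion, Set.mem_image]
      constructor
      · rintro ⟨hxi, L, hL, hxL⟩
        exact ⟨L ∩ Xs i, ⟨L, hL, rfl⟩, hxL, hxi⟩
      · rintro ⟨t, ⟨L, hL, rfl⟩, hxL, hxi⟩
        exact ⟨hxi, L, hL, hxL⟩
  have hind : ∀ i, Ls i = (fun L => L ∩ Xs i) '' ringGen S := by
    intro i
    rw [hRG]
    apply subset_antisymm
    · intro L hL
      exact ⟨L, hSR (mem_iUnion.2 ⟨i, hL⟩),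
        inter_eq_self_of_subset_left (hsub i L hL)⟩
    · rintro _ ⟨M, ⟨F, hFfin, hFS, rfl⟩, rfl⟩
      have h1 : (⋃₀ F) ∩ Xs i = ⋃₀ ((fun L => L ∩ Xs i) '' F) := by
        ext x
        simp only [mem_inter_iff, mem_sUnion, Set.mem_image]
        constructor
        · rintro ⟨⟨L, hL, hxL⟩, hxi⟩
          exact ⟨L ∩ Xs i, ⟨L, hL, rfl⟩, hxL, hxi⟩
        · rintro ⟨t, ⟨L, hL, rfl⟩, hxL, hxi⟩
          exact ⟨⟨L, hL, hxL⟩, hxi⟩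
      show (⋃₀ F) ∩ Xs i ∈ Ls i
      rw [h1]
      refine hsU i _ (hFfin.image _) ?_
      rintro t ⟨L, hL, rfl⟩
      obtain ⟨j, hj⟩ := mem_iUnion.1 (hFS hL)
      exact key2 i j L hj
  refine ⟨hRG, fun i => ⟨hcompat i, hind i⟩, ?_, ?_⟩
  · rintro _ ⟨i, rfl⟩
    exact hcompat i
  · intro M hM
    rw [hRG] at hM
    obtain ⟨F, hFfin, hFS, rfl⟩ := hM
    have hF' : ∀ G : Set (Set A), G.Finite → G ⊆ S →
        ∃ F' ⊆ Set.range Xs, F'.Finite ∧ ⋃₀ G ⊆ ⋃₀ F' := by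
      intro G hG
      refine Set.Finite.induction_on G hG
        (fun _ => ⟨∅, empty_subset _, finite_empty, by simp⟩) ?_
      intro L F hL hFfin2 ih hsub'
      obtain ⟨F', hF'sub, hF'fin, hF'cov⟩ := ih fun x hx => hsub' (mem_insert_of_mem _ hx)
      obtain ⟨i, hi⟩ := mem_iUnion.1 (hsub' (mem_insert _ _))
      refine ⟨insert (Xs i) F', insert_subset (mem_range_self i) hF'sub,
        hF'fin.insert _, ?_⟩
      rw [sUnion_insert, sUnion_insert]
      exact union_subset_union (hsub i L hi) hF'cov
    obtain ⟨F', hF'sub, hF'fin, hF'cov⟩ := hF' F hFfin hFS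
    refine ⟨F', hF'sub, hF'fin, ?_⟩
    have h2 : ⋃₀ F' ⊆ ⋃₀ Set.range Xs := sUnion_mono hF'sub
    rw [inter_eq_right.mpr (hF'cov.trans h2), inter_eq_right.mpr hF'cov]
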